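/- Let $f : \mathbb{R}^d \to \mathbb{R}$ be differentiable with $L$-Lipschitz gradient, let $H$ be a symmetric matrix with $\sigma_{\min} I \preceq H \preceq \sigma_{\max} I$ for $0 < \sigma_{\min} \leq \sigma_{\max}$, let $v \in \mathbb{R}^d$, $\eta > 0$, and set $x^+ = x - \eta H v$. Then $f(x^+) \leq f(x) - \eta\left(\frac{\sigma_{\min}}{2} - \frac{L\eta\sigma_{\max}^2}{2}\right)\|v\|^2 + \frac{\eta \sigma_{\max}}{2}\|\nabla f(x) - v\|^2$. -/

import Mathlib

open scoped RealInnerProductSpace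

lemma descent_aux {d : ℕ} {f : EuclideanSpace ℝ (Fin d) → ℝ} {L : ℝ}
    (hdiff : Differentiable ℝ f)
    (hlip : ∀ a b : EuclideanSpace ℝ (Fin d),
      ‖gradient f a - gradient f b‖ ≤ L * ‖a - b‖)
    (x y : EuclideanSpace ℝ (Fin d)) :
    f y ≤ f x + ⟪gradient f x, y - x⟫ + L / 2 * ‖y - x‖ ^ 2 := by
  set u := y - x with hu
  have key : ∀ p : EuclideanSpace ℝ (Fin d),
      fderiv ℝ f p u = ⟪gradient f p, u⟫ := by
    intro p; rw [gradient]; simp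
  set φ : ℝ → ℝ := fun t =>
    f (x + t • u) - t * ⟪gradient f x, u⟫ - L / 2 * t ^ 2 * ‖u‖ ^ 2 with hφ
  have hc : ∀ t : ℝ, HasDerivAt (fun s : ℝ => x + s • u) u t := by
    intro t
    simpa using ((hasDerivAt_id t).smul_const u).const_add x
  have hφ' : ∀ t : ℝ, HasDerivAt φ
      (⟪gradient f (x + t • u), u⟫ - ⟪gradient f x, u⟫ - L * t * ‖u‖ ^ 2) t := by
    intro t
    have h1 : HasDerivAt (fun s : ℝ => f (x + s • u)) (fderiv ℝ f (x + t • u) u) t :=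
      (hdiff (x + t • u)).hasFDerivAt.comp_hasDerivAt t (hc t)
    rw [key] at h1
    have h2 : HasDerivAt (fun s : ℝ => s * ⟪gradient f x, u⟫) ⟪gradient f x, u⟫ t := by
      simpa using (hasDerivAt_id t).mul_const ⟪gradient f x, u⟫
    have h3 : HasDerivAt (fun s : ℝ => L / 2 * s ^ 2 * ‖u‖ ^ 2) (L * t * ‖u‖ ^ 2) t := by
      have := ((hasDerivAt_pow 2 t).const_mul (L / 2)).mul_const (‖u‖ ^ 2)
      refine this.congr_deriv ?_
      rw [show (2:ℕ) - 1 = 1 from rfl]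
      push_cast
      ring
    exact (h1.sub h2).sub h3
  have hmono : φ 1 ≤ φ 0 := by
    have : AntitoneOn φ (Set.Icc 0 1) := by
      apply antitoneOn_of_deriv_nonpos (convex_Icc 0 1)
      · exact (Differentiable.continuous fun t => (hφ' t).differentiableAt).continuousOn
      · intro t ht
        exact (hφ' t).differentiableAt.differentiableWithinAt
      · intro t ht
        rw [(hφ' t).deriv]
        rw [interior_Icc] at ht
        have hb : ⟪gradient f (x + t • u) - gradient f x, u⟫ ≤ L * t * ‖u‖ ^ 2 := by
          calc ⟪gradient f (x + t • u) - gradient f x, u⟫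
              ≤ ‖gradient f (x + t • u) - gradient f x‖ * ‖u‖ := real_inner_le_norm _ _
            _ ≤ (L * ‖(x + t • u) - x‖) * ‖u‖ := by
                gcongr; exact hlip _ _
            _ = L * t * ‖u‖ ^ 2 := by
                simp [norm_smul, abs_of_pos ht.1]; ring
        rw [inner_sub_left] at hb
        linarith
    exact this (by norm_num) (by norm_num) (by norm_num)
  have h0 : φ 0 = f x := by simp [hφ]
  have h1 : φ 1 = f y - ⟪gradient f x, u⟫ - L / 2 * ‖u‖ ^ 2 := by
    simp [hφ, hu]
  rw [h0, h1] at hmono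
  linarith

/-- the one-step descent inequality for a quasi-Newton step
`x⁺ = x - η H v` with an `L`-smooth function `f` and preconditioner `H`
satisfying `σmin I ⪯ H ⪯ σmax I`. -/
theorem quasi_newton_descent (d : ℕ) (f : EuclideanSpace ℝ (Fin d) → ℝ) (L : ℝ)
    (hdiff : Differentiable ℝ f)
    (hlip : ∀ a b : EuclideanSpace ℝ (Fin d),
      ‖gradient f a - gradient f b‖ ≤ L * ‖a - b‖)
    (σmin σmax : ℝ) (hσmin : 0 < σmin) (hσ : σmin ≤ σmax)
    (H : EuclideanSpace ℝ (Fin d) →L[ℝ] EuclideanSpace ℝ (Fin d))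
    (hHsym : ∀ a b : EuclideanSpace ℝ (Fin d), ⟪H a, b⟫ = ⟪a, H b⟫)
    (hHlow : ∀ z : EuclideanSpace ℝ (Fin d), σmin * ‖z‖ ^ 2 ≤ ⟪z, H z⟫)
    (hHup : ∀ z : EuclideanSpace ℝ (Fin d), ⟪z, H z⟫ ≤ σmax * ‖z‖ ^ 2)
    (v x xp : EuclideanSpace ℝ (Fin d)) (η : ℝ) (hη : 0 < η)
    (hxp : xp = x - η • H v) :
    f xp ≤ f x - η * (σmin / 2 - L * η * σmax ^ 2 / 2) * ‖v‖ ^ 2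
      + η * σmax / 2 * ‖gradient f x - v‖ ^ 2 := by
  have hσmax : (0:ℝ) < σmax := lt_of_lt_of_le hσmin hσ
  set g := gradient f x with hg
  by_cases hv : v = 0
  · subst hv
    have hxx : xp = x := by simp [hxp]
    subst hxx
    have h1 : (0:ℝ) ≤ η * σmax / 2 * ‖g - 0‖ ^ 2 := by positivity
    simp only [norm_zero]
    nlinarith
  -- v ≠ 0
  have hvpos : 0 < ‖v‖ := norm_pos_iff.mpr hv
  have hHvpos : 0 < ‖H v‖ := by
    rcases (norm_nonneg (H v)).lt_or_eq with h | h
    · exact h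
    · exfalso
      have h0 : H v = 0 := norm_eq_zero.mp h.symm
      have h1 := hHlow v
      rw [h0, inner_zero_right] at h1
      nlinarith [mul_pos hσmin (mul_pos hvpos hvpos)]
  have hL : 0 ≤ L := by
    have h3 : ‖x - xp‖ = η * ‖H v‖ := by
      rw [hxp]
      simp only [sub_sub_cancel, norm_smul, Real.norm_eq_abs, abs_of_pos hη]
    have h4 : 0 < ‖x - xp‖ := by rw [h3]; positivity
    nlinarith [hlip x xp, norm_nonneg (gradient f x - gradient f xp)]
  -- Step A: descent lemma
  have hA := descent_aux hdiff hlip x xp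
  have hdiffxp : xp - x = -(η • H v) := by rw [hxp]; abel
  have hinner : ⟪g, xp - x⟫ = -(η * ⟪g, H v⟫) := by
    rw [hdiffxp, inner_neg_right, real_inner_smul_right]
  have hnorm : ‖xp - x‖ ^ 2 = η ^ 2 * ‖H v‖ ^ 2 := by
    rw [hdiffxp, norm_neg, norm_smul, Real.norm_eq_abs, abs_of_pos hη]
    ring
  -- symmetric expansion helper
  have hsym2 : ∀ a b : EuclideanSpace ℝ (Fin d),
      ⟪a + b, H (a + b)⟫ = ⟪a, H a⟫ + 2 * ⟪a, H b⟫ + ⟪b, H b⟫ := by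
    intro a b
    have hba : ⟪b, H a⟫ = ⟪a, H b⟫ := by rw [← hHsym, real_inner_comm]
    rw [map_add, inner_add_left, inner_add_right, inner_add_right, hba]
    ring
  -- Step B: ⟪g, Hv⟫ ≥ σmin/2 ‖v‖² - σmax/2 ‖g - v‖²
  have hB : σmin / 2 * ‖v‖ ^ 2 - σmax / 2 * ‖g - v‖ ^ 2 ≤ ⟪g, H v⟫ := by
    have hpsd : (0:ℝ) ≤ ⟪g, H g⟫ := le_trans (by positivity) (hHlow g)
    have hgdecomp : g = (g - v) + v := by abel
    have hexp : ⟪g, H g⟫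
        = ⟪g - v, H (g - v)⟫ + 2 * ⟪g - v, H v⟫ + ⟪v, H v⟫ := by
      have h := hsym2 (g - v) v
      rw [show g - v + v = g by abel] at h
      exact h
    have hgv : ⟪g, H v⟫ = ⟪g - v, H v⟫ + ⟪v, H v⟫ := by
      nth_rewrite 1 [hgdecomp]
      rw [inner_add_left]
    have h1 := hHlow v
    have h2 := hHup (g - v)
    linarith
  -- Step C: ‖Hv‖² ≤ σmax² ‖v‖²
  have hC : ‖H v‖ ^ 2 ≤ σmax ^ 2 * ‖v‖ ^ 2 := by
    set w := H v with hw
    have hq : ∀ t : ℝ, 0 ≤ ⟪w, H w⟫ * (t * t) + 2 * ⟪v, H w⟫ * t + ⟪v, H v⟫ := by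
      intro t
      have h0 : (0:ℝ) ≤ ⟪v + t • w, H (v + t • w)⟫ :=
        le_trans (by positivity) (hHlow _)
      have hexp : ⟪v + t • w, H (v + t • w)⟫
          = ⟪w, H w⟫ * (t * t) + 2 * ⟪v, H w⟫ * t + ⟪v, H v⟫ := by
        rw [hsym2 v (t • w), map_smul, real_inner_smul_right, real_inner_smul_left,
          real_inner_smul_right]
        ring
      linarith [hexp ▸ h0]
    have hdisc := discrim_le_zero hq
    rw [discrim] at hdisc
    have hkey : ‖w‖ ^ 2 = ⟪v, H w⟫ := by
      rw [← hHsym, hw, real_inner_self_eq_norm_sq]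
    have hup1 := hHup v
    have hup2 := hHup w
    have hlow2 : (0:ℝ) ≤ ⟪w, H w⟫ := le_trans (by positivity) (hHlow w)
    have hlow1 : (0:ℝ) ≤ ⟪v, H v⟫ := le_trans (by positivity) (hHlow v)
    have h5 : ⟪w, H w⟫ * ⟪v, H v⟫ ≤ (σmax * ‖w‖ ^ 2) * (σmax * ‖v‖ ^ 2) :=
      mul_le_mul hup2 hup1 hlow1 (by positivity)
    have h4 : (‖w‖ ^ 2) ^ 2 ≤ (σmax * ‖w‖ ^ 2) * (σmax * ‖v‖ ^ 2) := by
      nlinarith [hdisc, h5, hkey]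
    have hwpos : 0 < ‖w‖ := hHvpos
    have h6 : ‖w‖ ^ 2 * ‖w‖ ^ 2 ≤ (σmax ^ 2 * ‖v‖ ^ 2) * ‖w‖ ^ 2 := by linarith [h4]
    exact le_of_mul_le_mul_right h6 (by positivity)
  -- combine
  rw [← hg, hinner, hnorm] at hA
  have e1 : η * (σmin / 2 * ‖v‖ ^ 2 - σmax / 2 * ‖g - v‖ ^ 2) ≤ η * ⟪g, H v⟫ :=
    mul_le_mul_of_nonneg_left hB hη.le
  have e2 : L / 2 * η ^ 2 * ‖H v‖ ^ 2 ≤ L / 2 * η ^ 2 * (σmax ^ 2 * ‖v‖ ^ 2) :=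
    mul_le_mul_of_nonneg_left hC (by positivity)
  calc f xp ≤ f x + -(η * ⟪g, H v⟫) + L / 2 * (η ^ 2 * ‖H v‖ ^ 2) := hA
    _ ≤ f x + -(η * (σmin / 2 * ‖v‖ ^ 2 - σmax / 2 * ‖g - v‖ ^ 2))
        + L / 2 * η ^ 2 * (σmax ^ 2 * ‖v‖ ^ 2) := by linarith [e1, e2]
    _ = f x - η * (σmin / 2 - L * η * σmax ^ 2 / 2) * ‖v‖ ^ 2
        + η * σmax / 2 * ‖g - v‖ ^ 2 := by ring
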